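/- Let Q be a bounded quasinilpotent operator on a complex Banach space X, and suppose z ∈ T_Q^{1/2}, i.e., M := sup_{j≥0} (j+1)^{1/2}‖zQ(I+zQ)^j‖ < ∞. Then there is a constant C_r = √π · M such that for all s ≥ 0: ‖(I − szQ)^{-1}‖ ≤ C_r (s+1)^{1/2} + 1. -/

import Mathlib

set_option maxHeartbeats 1000000
open MeasureTheory Set


private lemma aux_integrable {c : ℝ} (hc : 0 < c) :
    IntegrableOn (fun t : ℝ => t ^ ((1/2 : ℝ) - 1) * Real.exp (-(c * t))) (Ioi 0) := by
  have h0 : IntegrableOn (fun x : ℝ => Real.exp (-x) * x ^ ((1/2:ℝ) - 1)) (Ioi 0) :=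
    Real.GammaIntegral_convergent one_half_pos
  have h1 : IntegrableOn (fun t : ℝ => Real.exp (-(c*t)) * (c*t) ^ ((1/2:ℝ) - 1)) (Ioi 0) := by
    have := (integrableOn_Ioi_comp_mul_left_iff
      (fun x : ℝ => Real.exp (-x) * x ^ ((1/2:ℝ) - 1)) 0 hc).mpr
    simpa using this (by simpa using h0)
  have h2 : IntegrableOn (fun t : ℝ => (c ^ ((1/2:ℝ)-1))⁻¹ * (Real.exp (-(c*t)) * (c*t) ^ ((1/2:ℝ) - 1))) (Ioi 0) := h1.const_mul _
  refine h2.congr_fun (fun t ht => ?_) measurableSet_Ioi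
  have htpos : (0:ℝ) < t := ht
  have hcne : c ^ ((1/2:ℝ)-1) ≠ 0 := (Real.rpow_pos_of_pos hc _).ne'
  beta_reduce; rw [Real.mul_rpow hc.le htpos.le]
  field_simp

private lemma aux_anti {c : ℝ} (hc : 0 < c) {x y : ℝ} (hx : 0 < x) (hxy : x ≤ y) :
    y ^ ((1/2 : ℝ) - 1) * Real.exp (-(c * y)) ≤ x ^ ((1/2 : ℝ) - 1) * Real.exp (-(c * x)) := by
  have h1 : y ^ ((1/2 : ℝ) - 1) ≤ x ^ ((1/2 : ℝ) - 1) :=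
    Real.rpow_le_rpow_of_nonpos hx hxy (by norm_num)
  have h2 : Real.exp (-(c*y)) ≤ Real.exp (-(c*x)) := by
    apply Real.exp_le_exp.mpr; nlinarith
  exact mul_le_mul h1 h2 (Real.exp_pos _).le (Real.rpow_nonneg hx.le _)

private lemma aux_sum_le {c : ℝ} (hc : 0 < c) :
    ∑' k : ℕ, ((k:ℝ)+1) ^ ((1/2 : ℝ) - 1) * Real.exp (-(c * ((k:ℝ)+1)))
      ≤ Real.sqrt Real.pi / Real.sqrt c := by
  set f : ℝ → ℝ := fun t => t ^ ((1/2 : ℝ) - 1) * Real.exp (-(c * t)) with hf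
  have hint := aux_integrable hc
  have hval : ∫ t in Ioi (0:ℝ), f t = Real.sqrt Real.pi / Real.sqrt c := by
    rw [hf]
    rw [Real.integral_rpow_mul_exp_neg_mul_Ioi one_half_pos hc]
    rw [Real.Gamma_one_half_eq]
    rw [one_div, ← Real.sqrt_eq_rpow, Real.sqrt_inv]
    ring
  rw [← hval]
  apply Real.tsum_le_of_sum_range_le
  · intro n; positivity
  intro n
  have step : ∀ k : ℕ, f ((k:ℝ)+1) ≤ ∫ t in Ioc (k:ℝ) ((k:ℝ)+1), f t := by
    intro k
    have hsub : Ioc (k:ℝ) ((k:ℝ)+1) ⊆ Ioi 0 := fun t ht =>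
      lt_of_le_of_lt (by positivity) ht.1
    have hik : IntegrableOn f (Ioc (k:ℝ) ((k:ℝ)+1)) := hint.mono_set hsub
    calc f ((k:ℝ)+1) = ∫ _ in Ioc (k:ℝ) ((k:ℝ)+1), f ((k:ℝ)+1) := by
          rw [setIntegral_const]
          simp [Real.volume_Ioc]
      _ ≤ ∫ t in Ioc (k:ℝ) ((k:ℝ)+1), f t := by
          apply setIntegral_mono_on (integrableOn_const (by simp [Real.volume_Ioc])) hik
            measurableSet_Ioc
          intro t ht
          exact aux_anti hc (lt_of_le_of_lt (Nat.cast_nonneg k) ht.1) ht.2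
  calc ∑ k ∈ Finset.range n, f ((k:ℝ)+1)
      ≤ ∑ k ∈ Finset.range n, ∫ t in Ioc (k:ℝ) ((k:ℝ)+1), f t :=
        Finset.sum_le_sum fun k _ => step k
    _ = ∑ k ∈ Finset.range n, ∫ t in ((k:ℕ):ℝ)..(((k+1:ℕ)):ℝ), f t := by
        refine Finset.sum_congr rfl fun k _ => ?_
        rw [intervalIntegral.integral_of_le (by push_cast; linarith)]
        norm_num
    _ = ∫ t in ((0:ℕ):ℝ)..((n:ℕ):ℝ), f t := by
        apply intervalIntegral.sum_integral_adjacent_intervals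
        intro k _
        rw [intervalIntegrable_iff_integrableOn_Ioc_of_le (by push_cast; linarith)]
        exact hint.mono_set (fun t ht => lt_of_le_of_lt (Nat.cast_nonneg k) ht.1)
    _ = ∫ t in Ioc (0:ℝ) (n:ℝ), f t := by
        rw [intervalIntegral.integral_of_le (by exact_mod_cast Nat.zero_le n)]; norm_num
    _ ≤ ∫ t in Ioi (0:ℝ), f t := by
        apply setIntegral_mono_set hint
        · filter_upwards [ae_restrict_mem measurableSet_Ioi] with t ht
          have : (0:ℝ) < t := ht
          positivity
        · exact HasSubset.Subset.eventuallyLE Ioc_subset_Ioi_self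



theorem resolvent_growth_from_tauberian_half
    {X : Type*} [NormedAddCommGroup X] [NormedSpace ℂ X] [CompleteSpace X]
    (Q : X →L[ℂ] X) (hQ : spectrum ℂ Q = {0}) (z : ℂ) (M : ℝ)
    (hM : ∀ j : ℕ, Real.sqrt (j + 1) * ‖(z • Q) * (1 + z • Q) ^ j‖ ≤ M) :
    ∀ s : ℝ, 0 ≤ s →
      ‖Ring.inverse (1 - ((s : ℂ) * z) • Q)‖ ≤
        Real.sqrt Real.pi * M * Real.sqrt (s + 1) + 1 := by
  intro s hs
  have hM0 : 0 ≤ M := le_trans (by positivity) (hM 0)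
  have hpi0 : (0:ℝ) ≤ Real.sqrt Real.pi := Real.sqrt_nonneg _
  rcases eq_or_lt_of_le hs with h0 | hs0
  · -- s = 0
    rw [← h0]
    have h1 : ‖(1 : X →L[ℂ] X)‖ ≤ 1 := by
      rw [ContinuousLinearMap.one_def]; exact ContinuousLinearMap.norm_id_le
    simp only [Complex.ofReal_zero, zero_mul, zero_smul, sub_zero, Ring.inverse_one]
    have h2 : (0:ℝ) ≤ Real.sqrt Real.pi * M * Real.sqrt (0+1) := by positivity
    linarith
  · -- s > 0
    obtain ⟨A, hA⟩ : ∃ A : X →L[ℂ] X, A = z • Q := ⟨_, rfl⟩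
    obtain ⟨T, hTdef⟩ : ∃ T : ℕ → (X →L[ℂ] X), T = fun j => A * (1 + A) ^ j := ⟨_, rfl⟩
    have hMT : ∀ j : ℕ, Real.sqrt (j + 1) * ‖T j‖ ≤ M := by
      intro j; rw [hTdef]; simp only [hA]; exact hM j
    have hs1 : (0:ℝ) < s + 1 := by linarith
    obtain ⟨ξ, hxi⟩ : ∃ ξ : ℝ, ξ = s / (s + 1) := ⟨_, rfl⟩
    have hξ0 : 0 < ξ := hxi ▸ div_pos hs0 hs1
    have hξ1 : ξ < 1 := hxi ▸ (div_lt_one hs1).mpr (by linarith)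
    obtain ⟨ζ, hzeta⟩ : ∃ ζ : ℂ, ζ = (ξ : ℂ) := ⟨_, rfl⟩
    have hζn : ∀ j : ℕ, ‖ζ ^ j‖ = ξ ^ j := by
      intro j
      rw [norm_pow, hzeta, Complex.norm_real, Real.norm_eq_abs, abs_of_pos hξ0]
    have hT : ∀ j : ℕ, ‖T j‖ ≤ M / Real.sqrt (j + 1) := by
      intro j
      rw [le_div_iff₀ (by positivity)]
      calc ‖T j‖ * Real.sqrt (j+1) = Real.sqrt ((j:ℝ)+1) * ‖T j‖ := mul_comm _ _
        _ ≤ M := hMT j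
    have hsq1 : ∀ j : ℕ, (1:ℝ) ≤ Real.sqrt (j+1) := by
      intro j
      nlinarith [Real.sq_sqrt (show (0:ℝ) ≤ (j:ℝ)+1 by positivity),
        Real.sqrt_nonneg ((j:ℝ)+1), Nat.cast_nonneg (α := ℝ) j]
    have hTM : ∀ j : ℕ, ‖T j‖ ≤ M := fun j => (hT j).trans (div_le_self hM0 (hsq1 j))
    -- summability
    have hgeo : Summable (fun j : ℕ => M * ξ ^ j) :=
      (summable_geometric_of_lt_one hξ0.le hξ1).mul_left M
    have hnorm1 : ∀ j : ℕ, ‖ζ ^ j • T j‖ ≤ M * ξ ^ j := by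
      intro j
      rw [norm_smul (ζ ^ j) (T j), hζn j]
      calc ξ ^ j * ‖T j‖ ≤ ξ ^ j * M :=
            mul_le_mul_of_nonneg_left (hTM j) (by positivity)
        _ = M * ξ ^ j := mul_comm _ _
    have hnorm2 : ∀ j : ℕ, ‖ζ ^ j • T (j+1)‖ ≤ M * ξ ^ j := by
      intro j
      rw [norm_smul (ζ ^ j) (T (j+1)), hζn j]
      calc ξ ^ j * ‖T (j+1)‖ ≤ ξ ^ j * M :=
            mul_le_mul_of_nonneg_left (hTM (j+1)) (by positivity)
        _ = M * ξ ^ j := mul_comm _ _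
    have hsum1 : Summable (fun j : ℕ => ζ ^ j • T j) :=
      Summable.of_norm (Summable.of_nonneg_of_le (fun j => norm_nonneg _) hnorm1 hgeo)
    have hsum2 : Summable (fun j : ℕ => ζ ^ j • T (j+1)) :=
      Summable.of_norm (Summable.of_nonneg_of_le (fun j => norm_nonneg _) hnorm2 hgeo)
    obtain ⟨S', hS'def⟩ : ∃ S' : X →L[ℂ] X, S' = ∑' j : ℕ, ζ ^ j • T j := ⟨_, rfl⟩
    obtain ⟨W, hWdef⟩ : ∃ W : X →L[ℂ] X, W = ∑' j : ℕ, ζ ^ j • T (j+1) := ⟨_, rfl⟩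
    obtain ⟨V, hVdef⟩ : ∃ V : X →L[ℂ] X, V = 1 + ζ • S' := ⟨_, rfl⟩
    -- commutation
    have hcA : ∀ j : ℕ, Commute A ((1+A)^j) :=
      fun j => ((Commute.one_right A).add_right (Commute.refl A)).pow_right j
    have hcomm : ∀ j : ℕ, A * T j = T (j+1) - T j := by
      intro j
      rw [hTdef]
      calc A * (A * (1+A)^j) = A * ((1+A)^j * A) := by rw [(hcA j).eq]
        _ = (A * (1+A)^j) * A := by rw [mul_assoc]
        _ = A * (1+A)^(j+1) - A * (1+A)^j := by
            rw [pow_succ, ← mul_assoc, mul_add, mul_one]; abel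
    have hcommTA : ∀ j : ℕ, T j * A = A * T j := by
      intro j
      have h : Commute A (T j) := by
        rw [hTdef]; exact (Commute.refl A).mul_right (hcA j)
      exact h.eq.symm
    -- identities
    have hAS' : A * S' = W - S' := by
      rw [hS'def, hWdef]
      calc A * (∑' j : ℕ, ζ ^ j • T j) = ∑' j : ℕ, A * (ζ ^ j • T j) :=
            (hsum1.tsum_mul_left A).symm
        _ = ∑' j : ℕ, (ζ ^ j • T (j+1) - ζ ^ j • T j) := by
            refine tsum_congr fun j => ?_
            rw [mul_smul_comm, hcomm j, smul_sub]
        _ = (∑' j : ℕ, ζ ^ j • T (j+1)) - ∑' j : ℕ, ζ ^ j • T j := Summable.tsum_sub hsum2 hsum1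
    have hW : ζ • W = S' - T 0 := by
      have h2 : ζ • W = ∑' j : ℕ, ζ ^ (j+1) • T (j+1) := by
        rw [hWdef, ← Summable.tsum_const_smul ζ hsum2]
        exact tsum_congr fun j => by rw [smul_smul, ← pow_succ']
      have h := Summable.tsum_eq_zero_add hsum1
      simp only [pow_zero, one_smul] at h
      rw [h2, hS'def, h]
      abel
    have hT0 : T 0 = A := by rw [hTdef]; simp
    have hAV : A * V = (1 - ζ) • S' := by
      rw [hVdef, mul_add, mul_one, mul_smul_comm, hAS', smul_sub, hW, hT0, sub_smul, one_smul]
      abel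
    have hsξ : (s : ℂ) * (1 - ζ) = ζ := by
      have hsne : ((s : ℂ) + 1) ≠ 0 := by
        intro h
        have : ((s+1 : ℝ) : ℂ) = 0 := by push_cast; linear_combination h
        have := Complex.ofReal_eq_zero.mp this
        linarith
      rw [hzeta, hxi]
      push_cast
      field_simp
      ring
    have key : V - (s : ℂ) • (A * V) = 1 := by
      rw [hAV, smul_smul, hsξ, hVdef]
      abel
    have hVmul : (1 - (s:ℂ) • A) * V = 1 := by
      rw [sub_mul, one_mul, smul_mul_assoc]
      exact key
    have hS'A : S' * A = A * S' := by
      rw [hS'def]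
      calc (∑' j : ℕ, ζ ^ j • T j) * A = ∑' j : ℕ, (ζ ^ j • T j) * A :=
            (hsum1.tsum_mul_right A).symm
        _ = ∑' j : ℕ, A * (ζ ^ j • T j) := by
            refine tsum_congr fun j => ?_
            rw [smul_mul_assoc, hcommTA j, mul_smul_comm]
        _ = A * ∑' j : ℕ, ζ ^ j • T j := hsum1.tsum_mul_left A
    have hVA : V * A = A * V := by
      rw [hVdef, add_mul, one_mul, mul_add, mul_one, smul_mul_assoc, mul_smul_comm, hS'A]
    have hmulV : V * (1 - (s:ℂ) • A) = 1 := by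
      rw [mul_sub, mul_one, mul_smul_comm, hVA]
      exact key
    -- identify the inverse
    have hRi : Ring.inverse (1 - ((s:ℂ) * z) • Q) = V := by
      have hsm : ((s:ℂ) * z) • Q = (s:ℂ) • A := by rw [hA, mul_smul]
      rw [hsm]
      exact Ring.inverse_unit ⟨1 - (s:ℂ) • A, V, hVmul, hmulV⟩
    rw [hRi]
    -- norm estimate
    obtain ⟨c, hcdef⟩ : ∃ c : ℝ, c = -Real.log ξ := ⟨_, rfl⟩
    have hc : 0 < c := by rw [hcdef]; linarith [Real.log_neg hξ0 hξ1]
    have hxiexp : ∀ k : ℕ, ξ ^ k = Real.exp (-(c * k)) := by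
      intro k
      rw [hcdef, show -(-Real.log ξ * (k:ℝ)) = (k:ℝ) * Real.log ξ by ring,
        Real.exp_nat_mul, Real.exp_log hξ0]
    have hg : ∀ j : ℕ, ‖ζ^(j+1) • T j‖ ≤
        M * (((j:ℝ)+1) ^ ((1/2:ℝ)-1) * Real.exp (-(c*((j:ℝ)+1)))) := by
      intro j
      rw [norm_smul (ζ^(j+1)) (T j), hζn (j+1)]
      have h1 : ξ^(j+1) = Real.exp (-(c*((j:ℝ)+1))) := by
        rw [hxiexp (j+1)]; push_cast; ring_nf
      have h2 : ‖T j‖ ≤ M * ((j:ℝ)+1) ^ ((1/2:ℝ)-1) :=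
        calc ‖T j‖ ≤ M / Real.sqrt ((j:ℝ)+1) := hT j
          _ = M * ((j:ℝ)+1) ^ ((1/2:ℝ)-1) := by
              rw [show ((1/2:ℝ)-1) = -(1/2:ℝ) by norm_num, Real.rpow_neg (by positivity),
                ← Real.sqrt_eq_rpow, div_eq_mul_inv]
      calc ξ^(j+1) * ‖T j‖ ≤ ξ^(j+1) * (M * ((j:ℝ)+1) ^ ((1/2:ℝ)-1)) :=
            mul_le_mul_of_nonneg_left h2 (by positivity)
        _ = M * (((j:ℝ)+1) ^ ((1/2:ℝ)-1) * Real.exp (-(c*((j:ℝ)+1)))) := by rw [h1]; ring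
    have hgsum : Summable (fun j : ℕ =>
        M * (((j:ℝ)+1) ^ ((1/2:ℝ)-1) * Real.exp (-(c*((j:ℝ)+1))))) := by
      refine Summable.of_nonneg_of_le (fun j => by positivity) (fun j => ?_)
        (((summable_geometric_of_lt_one hξ0.le hξ1).mul_left (M * ξ)))
      have h1 : ((j:ℝ)+1) ^ ((1/2:ℝ)-1) ≤ 1 :=
        Real.rpow_le_one_of_one_le_of_nonpos
          (le_add_of_nonneg_left (Nat.cast_nonneg j)) (by norm_num)
      have h2 : Real.exp (-(c*((j:ℝ)+1))) = ξ^(j+1) := by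
        rw [hxiexp (j+1)]; push_cast; ring_nf
      have h3 : (0:ℝ) ≤ Real.exp (-(c*((j:ℝ)+1))) := (Real.exp_pos _).le
      calc M * (((j:ℝ)+1) ^ ((1/2:ℝ)-1) * Real.exp (-(c*((j:ℝ)+1))))
          ≤ M * (1 * Real.exp (-(c*((j:ℝ)+1)))) := by
            apply mul_le_mul_of_nonneg_left _ hM0
            exact mul_le_mul_of_nonneg_right h1 h3
        _ = M * ξ ^ (j+1) := by rw [one_mul, h2]
        _ = M * ξ * ξ ^ j := by rw [pow_succ]; ring
    have hnormctr : Summable (fun j : ℕ => ‖ζ^(j+1) • T j‖) :=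
      Summable.of_nonneg_of_le (fun j => norm_nonneg _) hg hgsum
    have hSfull : ζ • S' = ∑' j : ℕ, ζ^(j+1) • T j := by
      rw [hS'def, ← Summable.tsum_const_smul ζ hsum1]
      exact tsum_congr fun j => by rw [smul_smul, ← pow_succ']
    have hnormS : ‖ζ • S'‖ ≤ M * (Real.sqrt Real.pi / Real.sqrt c) := by
      rw [hSfull]
      calc ‖∑' j : ℕ, ζ^(j+1) • T j‖ ≤ ∑' j : ℕ, ‖ζ^(j+1) • T j‖ :=
            norm_tsum_le_tsum_norm hnormctr
        _ ≤ ∑' j : ℕ, M * (((j:ℝ)+1) ^ ((1/2:ℝ)-1) * Real.exp (-(c*((j:ℝ)+1)))) :=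
            Summable.tsum_le_tsum hg hnormctr hgsum
        _ = M * ∑' j : ℕ, ((j:ℝ)+1) ^ ((1/2:ℝ)-1) * Real.exp (-(c*((j:ℝ)+1))) := tsum_mul_left
        _ ≤ M * (Real.sqrt Real.pi / Real.sqrt c) :=
            mul_le_mul_of_nonneg_left (aux_sum_le hc) hM0
    have hclb : 1/(s+1) ≤ c := by
      have h := Real.log_le_sub_one_of_pos hξ0
      have he : ξ - 1 = -(1/(s+1)) := by rw [hxi]; field_simp; ring
      rw [hcdef]; linarith
    have hfin : Real.sqrt Real.pi / Real.sqrt c ≤ Real.sqrt Real.pi * Real.sqrt (s+1) := by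
      have h1 : Real.sqrt (1/(s+1)) ≤ Real.sqrt c := Real.sqrt_le_sqrt hclb
      have h2 : Real.sqrt (1/(s+1)) = 1 / Real.sqrt (s+1) := by
        rw [one_div, Real.sqrt_inv, one_div]
      have h3 : 0 < Real.sqrt c := Real.sqrt_pos.mpr hc
      have h4 : 0 < Real.sqrt (s+1) := Real.sqrt_pos.mpr hs1
      have h5 : 1 ≤ Real.sqrt (s+1) * Real.sqrt c := by
        rw [h2] at h1
        calc (1:ℝ) = Real.sqrt (s+1) * (1/Real.sqrt (s+1)) := by field_simp
          _ ≤ Real.sqrt (s+1) * Real.sqrt c := mul_le_mul_of_nonneg_left h1 h4.le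
      rw [div_le_iff₀ h3]
      nlinarith [hpi0, h5]
    have hV1 : ‖V‖ ≤ 1 + ‖ζ • S'‖ := by
      rw [hVdef]
      refine (norm_add_le _ _).trans ?_
      have h1 : ‖(1 : X →L[ℂ] X)‖ ≤ 1 := by
        rw [ContinuousLinearMap.one_def]; exact ContinuousLinearMap.norm_id_le
      linarith
    have h6 := hnormS.trans (mul_le_mul_of_nonneg_left hfin hM0)
    have h7 : M * (Real.sqrt Real.pi * Real.sqrt (s+1))
        = Real.sqrt Real.pi * M * Real.sqrt (s+1) := by ring
    linarith
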